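/- Assume ρ < 1 and set γ₀ = ρ². Then the compensation recursion is well defined: for every i ≥ 0 there exists a unique δ_i ∈ ℂ with 0 < |δ_i| < |γ_i| such that (γ_i, δ_i) satisfies the kernel equation, and a unique γ_{i+1} ∈ ℂ with 0 < |γ_{i+1}| < |δ_i| such that (γ_{i+1}, δ_i) satisfies the kernel equation; consequently 1 > ρ² = |γ₀| > |δ₀| > |γ₁| > |δ₁| > |γ₂| > ⋯. -/

import Mathlib

/-- The load ρ = λ(ā²+a²)/(2λ̄āa). -/
noncomputable def rhoLoad (a lam : ℝ) : ℝ :=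
  lam * ((1-a)^2 + a^2) / (2 * (1-lam) * (1-a) * a)

/-- The kernel equation in (γ, δ) ∈ ℂ². -/
def Kernel (a lam : ℝ) (g d : ℂ) : Prop :=
  (1 - ((1-(lam:ℂ))*((1-(a:ℂ))^2+(a:ℂ)^2) + (lam:ℂ)*(a:ℂ)*(1-(a:ℂ)))) * g * d
    = ((1-(lam:ℂ))*(1-(a:ℂ))*(a:ℂ)*g + (lam:ℂ)*((a:ℂ)^2+(1-(a:ℂ))^2)) * d^2
      + (lam:ℂ)*(1-(a:ℂ))*(a:ℂ)*d^3 + (1-(lam:ℂ))*(1-(a:ℂ))*(a:ℂ)*g^2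

lemma quad_root {A B C r1 r2 z : ℂ} (hA : A ≠ 0) (h12 : r1 ≠ r2)
    (h1 : A*r1^2 + B*r1 + C = 0) (h2 : A*r2^2 + B*r2 + C = 0)
    (hz : A*z^2 + B*z + C = 0) : z = r1 ∨ z = r2 := by
  have key : (z - r1) * (A*(z + r1) + B) = 0 := by linear_combination hz - h1
  rcases mul_eq_zero.1 key with h | h
  · exact Or.inl (sub_eq_zero.mp h)
  · right
    have key2 : (r2 - r1) * (A*(r2 + r1) + B) = 0 := by linear_combination h2 - h1
    have hlin : A*(r2 + r1) + B = 0 := by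
      rcases mul_eq_zero.1 key2 with h' | h'
      · exact absurd (sub_eq_zero.mp h') h12.symm
      · exact h'
    have : A * (z - r2) = 0 := by linear_combination h - hlin
    rcases mul_eq_zero.1 this with h' | h'
    · exact absurd h' hA
    · exact sub_eq_zero.mp h'

lemma cubic_root {A B C D r1 r2 r3 z : ℂ} (hA : A ≠ 0)
    (h12 : r1 ≠ r2) (h13 : r1 ≠ r3) (h23 : r2 ≠ r3)
    (h1 : A*r1^3 + B*r1^2 + C*r1 + D = 0) (h2 : A*r2^3 + B*r2^2 + C*r2 + D = 0)
    (h3 : A*r3^3 + B*r3^2 + C*r3 + D = 0)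
    (hz : A*z^3 + B*z^2 + C*z + D = 0) : z = r1 ∨ z = r2 ∨ z = r3 := by
  have key : (z - r1) * (A*(z^2 + z*r1 + r1^2) + B*(z + r1) + C) = 0 := by
    linear_combination hz - h1
  rcases mul_eq_zero.1 key with h | hq
  · exact Or.inl (sub_eq_zero.mp h)
  right
  have q2 : A*(r2^2 + r2*r1 + r1^2) + B*(r2 + r1) + C = 0 := by
    have key2 : (r2 - r1) * (A*(r2^2 + r2*r1 + r1^2) + B*(r2 + r1) + C) = 0 := by
      linear_combination h2 - h1
    rcases mul_eq_zero.1 key2 with h' | h'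
    · exact absurd (sub_eq_zero.mp h') h12.symm
    · exact h'
  have q3 : A*(r3^2 + r3*r1 + r1^2) + B*(r3 + r1) + C = 0 := by
    have key3 : (r3 - r1) * (A*(r3^2 + r3*r1 + r1^2) + B*(r3 + r1) + C) = 0 := by
      linear_combination h3 - h1
    rcases mul_eq_zero.1 key3 with h' | h'
    · exact absurd (sub_eq_zero.mp h') h13.symm
    · exact h'
  have key4 : (z - r2) * (A*(z + r2 + r1) + B) = 0 := by linear_combination hq - q2
  rcases mul_eq_zero.1 key4 with h | hl
  · exact Or.inl (sub_eq_zero.mp h)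
  right
  have hlin3 : A*(r3 + r2 + r1) + B = 0 := by
    have key5 : (r3 - r2) * (A*(r3 + r2 + r1) + B) = 0 := by linear_combination q3 - q2
    rcases mul_eq_zero.1 key5 with h' | h'
    · exact absurd (sub_eq_zero.mp h') h23.symm
    · exact h'
  have : A * (z - r3) = 0 := by linear_combination hl - hlin3
  rcases mul_eq_zero.1 this with h' | h'
  · exact absurd h' hA
  · exact sub_eq_zero.mp h'

lemma cubic_sign {A K M C γ : ℝ} (hA : 0 < A) (hK : 0 < K) (hM : 0 < M)
    (hAM : A < M) (hC : C = A + M + 2*K) (hg0 : 0 < γ) (hg1 : γ < 1) :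
    ∃ r1 r2 r3 : ℝ, r1 < -γ ∧ 0 < r2 ∧ r2 < γ ∧ γ < r3 ∧
      A*r1^3 + (K*γ+M)*r1^2 + (-(C*γ))*r1 + K*γ^2 = 0 ∧
      A*r2^3 + (K*γ+M)*r2^2 + (-(C*γ))*r2 + K*γ^2 = 0 ∧
      A*r3^3 + (K*γ+M)*r3^2 + (-(C*γ))*r3 + K*γ^2 = 0 := by
  have hC0 : 0 < C := by rw [hC]; positivity
  have hcont : Continuous (fun t : ℝ => A*t^3 + (K*γ+M)*t^2 + (-(C*γ))*t + K*γ^2) := by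
    fun_prop
  have hf0 : (0:ℝ) < A*0^3 + (K*γ+M)*0^2 + (-(C*γ))*0 + K*γ^2 := by
    have := mul_pos hK (mul_pos hg0 hg0); linarith
  have hfγ : A*γ^3 + (K*γ+M)*γ^2 + (-(C*γ))*γ + K*γ^2 < 0 := by
    rw [hC]
    linarith [mul_pos (mul_pos (add_pos hA hK) (sub_pos.mpr hg1)) (mul_pos hg0 hg0)]
  obtain ⟨r2, hr2mem, hr2⟩ := intermediate_value_Ioo' hg0.le hcont.continuousOn
    (Set.mem_Ioo.mpr ⟨hfγ, hf0⟩)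
  obtain ⟨N, hNdef⟩ : ∃ N : ℝ, N = K*γ + M + C*γ + K*γ^2 + C + 1 := ⟨_, rfl⟩
  have hN0 : 0 < N := by
    rw [hNdef]
    linarith [mul_pos hK hg0, mul_pos hC0 hg0, mul_pos hK (mul_pos hg0 hg0)]
  obtain ⟨T, hTdef⟩ : ∃ T : ℝ, T = N/A + γ + 1 := ⟨_, rfl⟩
  have hdivpos : 0 < N/A := div_pos hN0 hA
  have hT1 : 1 ≤ T := by rw [hTdef]; linarith
  have hγT : γ < T := by rw [hTdef]; linarith
  have hT0 : 0 < T := by linarith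
  have hAT : N ≤ A*T := by
    have h1 : A * (N/A) = N := by rw [mul_comm]; exact div_mul_cancel₀ N hA.ne'
    have h2 : A*T = A*(N/A) + A*(γ+1) := by rw [hTdef]; ring
    nlinarith [mul_pos hA (show (0:ℝ) < γ + 1 by linarith)]
  have hNT2 : N*T^2 ≤ A*T^3 := by
    have := mul_le_mul_of_nonneg_right hAT (sq_nonneg T)
    linarith [this]
  have hT2 : 1 ≤ T^2 := by nlinarith
  have hCγT : C*γ*T ≤ C*γ*T^2 := by
    linarith [mul_nonneg (mul_nonneg (mul_nonneg hC0.le hg0.le) hT0.le) (sub_nonneg.mpr hT1)]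
  have hfT : 0 < A*T^3 + (K*γ+M)*T^2 + (-(C*γ))*T + K*γ^2 := by
    rw [hNdef] at hNT2
    linarith [hNT2, hCγT, mul_pos hT0 hT0,
      mul_nonneg (mul_nonneg hK.le (mul_pos hg0 hg0).le) (sq_nonneg T),
      mul_nonneg hC0.le (sq_nonneg T),
      mul_nonneg hK.le (mul_pos hg0 hg0).le,
      mul_nonneg (mul_nonneg hK.le hg0.le) (sq_nonneg T),
      mul_nonneg hM.le (sq_nonneg T)]
  have hfnT : A*(-T)^3 + (K*γ+M)*(-T)^2 + (-(C*γ))*(-T) + K*γ^2 < 0 := by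
    rw [hNdef] at hNT2
    linarith [hNT2, hCγT, mul_pos hT0 hT0,
      mul_nonneg (mul_nonneg hK.le (mul_pos hg0 hg0).le) (sub_nonneg.mpr hT2),
      mul_nonneg hC0.le (sq_nonneg T)]
  have hfnγ : (0:ℝ) < A*(-γ)^3 + (K*γ+M)*(-γ)^2 + (-(C*γ))*(-γ) + K*γ^2 := by
    linarith [mul_pos (sub_pos.mpr hAM) (mul_pos hg0 hg0),
      mul_nonneg (mul_nonneg hA.le (mul_pos hg0 hg0).le) (sub_pos.mpr hg1).le,
      mul_pos (mul_pos hK hg0) (mul_pos hg0 hg0),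
      mul_pos hC0 (mul_pos hg0 hg0),
      mul_pos hK (mul_pos hg0 hg0)]
  obtain ⟨r3, hr3mem, hr3⟩ := intermediate_value_Ioo hγT.le hcont.continuousOn
    (Set.mem_Ioo.mpr ⟨hfγ, hfT⟩)
  obtain ⟨r1, hr1mem, hr1⟩ := intermediate_value_Ioo (show -T ≤ -γ by linarith)
    hcont.continuousOn (Set.mem_Ioo.mpr ⟨hfnT, hfnγ⟩)
  exact ⟨r1, r2, r3, hr1mem.2, hr2mem.1, hr2mem.2, hr3mem.1, hr1, hr2, hr3⟩

lemma quad_sign {A K M C δ : ℝ} (hA : 0 < A) (hK : 0 < K) (hM : 0 < M)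
    (hC : C = A + M + 2*K) (hd0 : 0 < δ) (hd1 : δ < 1) :
    ∃ s1 s2 : ℝ, 0 < s1 ∧ s1 < δ ∧ δ < s2 ∧
      K*s1^2 + (K*δ^2 - C*δ)*s1 + (M*δ^2 + A*δ^3) = 0 ∧
      K*s2^2 + (K*δ^2 - C*δ)*s2 + (M*δ^2 + A*δ^3) = 0 := by
  have hC0 : 0 < C := by rw [hC]; positivity
  have hcont : Continuous (fun x : ℝ => K*x^2 + (K*δ^2 - C*δ)*x + (M*δ^2 + A*δ^3)) := by
    fun_prop
  have hf0 : (0:ℝ) < K*0^2 + (K*δ^2 - C*δ)*0 + (M*δ^2 + A*δ^3) := by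
    have h1 := mul_pos hM (mul_pos hd0 hd0)
    have h2 := mul_pos hA (mul_pos (mul_pos hd0 hd0) hd0)
    linarith
  have hfδ : K*δ^2 + (K*δ^2 - C*δ)*δ + (M*δ^2 + A*δ^3) < 0 := by
    rw [hC]
    linarith [mul_pos (mul_pos (add_pos hK hA) (sub_pos.mpr hd1)) (mul_pos hd0 hd0)]
  obtain ⟨s1, hs1mem, hs1⟩ := intermediate_value_Ioo' hd0.le hcont.continuousOn
    (Set.mem_Ioo.mpr ⟨hfδ, hf0⟩)
  obtain ⟨N, hNdef⟩ : ∃ N : ℝ, N = K*δ^2 + C*δ + M*δ^2 + A*δ^3 + 1 := ⟨_, rfl⟩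
  have hN0 : 0 < N := by
    rw [hNdef]
    linarith [mul_pos hK (mul_pos hd0 hd0), mul_pos hC0 hd0,
      mul_pos hM (mul_pos hd0 hd0), mul_pos hA (mul_pos (mul_pos hd0 hd0) hd0)]
  obtain ⟨T, hTdef⟩ : ∃ T : ℝ, T = N/K + δ + 1 := ⟨_, rfl⟩
  have hdivpos : 0 < N/K := div_pos hN0 hK
  have hT1 : 1 ≤ T := by rw [hTdef]; linarith
  have hδT : δ < T := by rw [hTdef]; linarith
  have hT0 : 0 < T := by linarith
  have hKT : N ≤ K*T := by
    have h1 : K * (N/K) = N := by rw [mul_comm]; exact div_mul_cancel₀ N hK.ne'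
    have h2 : K*T = K*(N/K) + K*(δ+1) := by rw [hTdef]; ring
    nlinarith [mul_pos hK (show (0:ℝ) < δ + 1 by linarith)]
  have hNT : N*T ≤ K*T^2 := by
    have := mul_le_mul_of_nonneg_right hKT hT0.le
    linarith [this]
  have hCδT : C*δ ≤ C*δ*T := by
    linarith [mul_nonneg (mul_nonneg hC0.le hd0.le) (sub_nonneg.mpr hT1)]
  have hfT : (0:ℝ) < K*T^2 + (K*δ^2 - C*δ)*T + (M*δ^2 + A*δ^3) := by
    rw [hNdef] at hNT
    linarith [hNT, mul_pos hT0 hT0,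
      mul_nonneg (mul_nonneg hK.le (mul_pos hd0 hd0).le) hT0.le,
      mul_nonneg (mul_nonneg hC0.le hd0.le) hT0.le,
      mul_nonneg (mul_nonneg hM.le (mul_pos hd0 hd0).le) hT0.le,
      mul_nonneg (mul_nonneg hA.le (mul_pos (mul_pos hd0 hd0) hd0).le) hT0.le,
      mul_pos hM (mul_pos hd0 hd0),
      mul_pos hA (mul_pos (mul_pos hd0 hd0) hd0), hT1]
  obtain ⟨s2, hs2mem, hs2⟩ := intermediate_value_Ioo hδT.le hcont.continuousOn
    (Set.mem_Ioo.mpr ⟨hfδ, hfT⟩)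
  exact ⟨s1, s2, hs1mem.1, hs1mem.2, hs2mem.1, hs1, hs2⟩

lemma kernel_iff (a lam : ℝ) (g z : ℂ) :
    Kernel a lam g z ↔
      ((lam*(1-a)*a : ℝ) : ℂ)*z^3
        + (((1-lam)*(1-a)*a : ℝ)*g + ((lam*(a^2+(1-a)^2) : ℝ):ℂ))*z^2
        + (-(((lam*(1-a)*a + lam*(a^2+(1-a)^2) + 2*((1-lam)*(1-a)*a) : ℝ):ℂ))*g)*z
        + ((1-lam)*(1-a)*a : ℝ)*g^2 = 0 := by
  unfold Kernel
  constructor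
  · intro h
    push_cast
    linear_combination -h
  · intro h
    push_cast at h
    linear_combination -h

lemma coeffs_pos {a lam : ℝ} (ha : 0 < a) (ha1 : a < 1) (hl : 0 < lam) (hl1 : lam < 1) :
    0 < lam*(1-a)*a ∧ 0 < (1-lam)*(1-a)*a ∧ 0 < lam*(a^2+(1-a)^2) ∧
      lam*(1-a)*a < lam*(a^2+(1-a)^2) := by
  have h1 : 0 < 1 - a := by linarith
  have h2 : 0 < 1 - lam := by linarith
  refine ⟨by positivity, by positivity, by positivity, ?_⟩
  have key : 0 < a^2 + (1-a)^2 - (1-a)*a := by nlinarith [sq_nonneg (2*a-1)]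
  nlinarith [mul_pos hl key]

lemma dstep (a lam : ℝ) (ha : 0 < a) (ha1 : a < 1) (hl : 0 < lam) (hl1 : lam < 1)
    (γ : ℝ) (hg0 : 0 < γ) (hg1 : γ < 1) :
    ∃ δ : ℝ, 0 < δ ∧ δ < γ ∧ Kernel a lam (γ:ℂ) (δ:ℂ) ∧
      ∀ z : ℂ, 0 < ‖z‖ → ‖z‖ < γ → Kernel a lam (γ:ℂ) z → z = (δ:ℂ) := by
  obtain ⟨hA, hK, hM, hAM⟩ := coeffs_pos ha ha1 hl hl1
  obtain ⟨r1, r2, r3, hr1γ, hr20, hr2γ, hγr3, e1, e2, e3⟩ :=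
    cubic_sign (C := lam*(1-a)*a + lam*(a^2+(1-a)^2) + 2*((1-lam)*(1-a)*a))
      hA hK hM hAM rfl hg0 hg1
  have E : ∀ r : ℝ,
      lam*(1-a)*a*r^3 + ((1-lam)*(1-a)*a*γ + lam*(a^2+(1-a)^2))*r^2
        + (-((lam*(1-a)*a + lam*(a^2+(1-a)^2) + 2*((1-lam)*(1-a)*a))*γ))*r
        + (1-lam)*(1-a)*a*γ^2 = 0 →
      ((lam*(1-a)*a : ℝ):ℂ)*(r:ℂ)^3
        + (((1-lam)*(1-a)*a : ℝ)*(γ:ℂ) + ((lam*(a^2+(1-a)^2) : ℝ):ℂ))*(r:ℂ)^2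
        + (-(((lam*(1-a)*a + lam*(a^2+(1-a)^2) + 2*((1-lam)*(1-a)*a) : ℝ):ℂ))*(γ:ℂ))*(r:ℂ)
        + ((1-lam)*(1-a)*a : ℝ)*(γ:ℂ)^2 = 0 := by
    intro r h
    have h' := congrArg (fun x : ℝ => (x:ℂ)) h
    push_cast at h' ⊢
    linear_combination h'
  refine ⟨r2, hr20, hr2γ, ?_, ?_⟩
  · rw [kernel_iff]
    exact E r2 e2
  · intro z hz0 hzγ hKz
    rw [kernel_iff] at hKz
    have hAne : ((lam*(1-a)*a : ℝ) : ℂ) ≠ 0 := by exact_mod_cast hA.ne'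
    have h12 : ((r1:ℝ):ℂ) ≠ ((r2:ℝ):ℂ) := by
      exact_mod_cast show r1 ≠ r2 from ne_of_lt (by linarith)
    have h13 : ((r1:ℝ):ℂ) ≠ ((r3:ℝ):ℂ) := by
      exact_mod_cast show r1 ≠ r3 from ne_of_lt (by linarith)
    have h23 : ((r2:ℝ):ℂ) ≠ ((r3:ℝ):ℂ) := by
      exact_mod_cast show r2 ≠ r3 from ne_of_lt (by linarith)
    have hzcube :
        ((lam*(1-a)*a : ℝ):ℂ)*z^3
          + (((1-lam)*(1-a)*a : ℝ)*(γ:ℂ) + ((lam*(a^2+(1-a)^2) : ℝ):ℂ))*z^2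
          + (-(((lam*(1-a)*a + lam*(a^2+(1-a)^2) + 2*((1-lam)*(1-a)*a) : ℝ):ℂ))*(γ:ℂ))*z
          + ((1-lam)*(1-a)*a : ℝ)*(γ:ℂ)^2 = 0 := by
      linear_combination hKz
    rcases cubic_root hAne h12 h13 h23 (E r1 e1) (E r2 e2) (E r3 e3) hzcube with h | h | h
    · exfalso
      rw [h, Complex.norm_real, Real.norm_eq_abs, abs_of_neg (by linarith : r1 < 0)] at hzγ
      linarith
    · exact h
    · exfalso
      rw [h, Complex.norm_real, Real.norm_eq_abs, abs_of_pos (by linarith : 0 < r3)] at hzγ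
      linarith

lemma gstep (a lam : ℝ) (ha : 0 < a) (ha1 : a < 1) (hl : 0 < lam) (hl1 : lam < 1)
    (δ : ℝ) (hd0 : 0 < δ) (hd1 : δ < 1) :
    ∃ γ' : ℝ, 0 < γ' ∧ γ' < δ ∧ Kernel a lam (γ':ℂ) (δ:ℂ) ∧
      ∀ z : ℂ, 0 < ‖z‖ → ‖z‖ < δ → Kernel a lam z (δ:ℂ) → z = (γ':ℂ) := by
  obtain ⟨hA, hK, hM, hAM⟩ := coeffs_pos ha ha1 hl hl1
  obtain ⟨s1, s2, hs10, hs1δ, hδs2, e1, e2⟩ :=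
    quad_sign (C := lam*(1-a)*a + lam*(a^2+(1-a)^2) + 2*((1-lam)*(1-a)*a))
      hA hK hM rfl hd0 hd1
  have E : ∀ s : ℝ,
      (1-lam)*(1-a)*a*s^2
        + ((1-lam)*(1-a)*a*δ^2
            - (lam*(1-a)*a + lam*(a^2+(1-a)^2) + 2*((1-lam)*(1-a)*a))*δ)*s
        + (lam*(a^2+(1-a)^2)*δ^2 + lam*(1-a)*a*δ^3) = 0 →
      (((1-lam)*(1-a)*a : ℝ):ℂ)*(s:ℂ)^2
        + ((((1-lam)*(1-a)*a : ℝ):ℂ)*(δ:ℂ)^2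
            - (((lam*(1-a)*a + lam*(a^2+(1-a)^2) + 2*((1-lam)*(1-a)*a) : ℝ):ℂ))*(δ:ℂ))*(s:ℂ)
        + (((lam*(a^2+(1-a)^2) : ℝ):ℂ)*(δ:ℂ)^2 + ((lam*(1-a)*a : ℝ):ℂ)*(δ:ℂ)^3) = 0 := by
    intro s h
    have h' := congrArg (fun x : ℝ => (x:ℂ)) h
    push_cast at h' ⊢
    linear_combination h'
  refine ⟨s1, hs10, hs1δ, ?_, ?_⟩
  · rw [kernel_iff]
    linear_combination E s1 e1
  · intro z hz0 hzδ hKz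
    rw [kernel_iff] at hKz
    have hKne : (((1-lam)*(1-a)*a : ℝ) : ℂ) ≠ 0 := by exact_mod_cast hK.ne'
    have h12 : ((s1:ℝ):ℂ) ≠ ((s2:ℝ):ℂ) := by
      exact_mod_cast show s1 ≠ s2 from ne_of_lt (by linarith)
    have hzquad :
        (((1-lam)*(1-a)*a : ℝ):ℂ)*z^2
          + ((((1-lam)*(1-a)*a : ℝ):ℂ)*(δ:ℂ)^2
              - (((lam*(1-a)*a + lam*(a^2+(1-a)^2) + 2*((1-lam)*(1-a)*a) : ℝ):ℂ))*(δ:ℂ))*z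
          + (((lam*(a^2+(1-a)^2) : ℝ):ℂ)*(δ:ℂ)^2 + ((lam*(1-a)*a : ℝ):ℂ)*(δ:ℂ)^3) = 0 := by
      linear_combination hKz
    rcases quad_root hKne h12 (E s1 e1) (E s2 e2) hzquad with h | h
    · exact h
    · exfalso
      rw [h, Complex.norm_real, Real.norm_eq_abs, abs_of_pos (by linarith : 0 < s2)] at hzδ
      linarith

/-- if ρ < 1, the compensation recursion starting at γ₀ = ρ² is
well defined: at each step there is a unique δ_i with 0 < |δ_i| < |γ_i| solving
the kernel equation with γ_i, and a unique γ_{i+1} with 0 < |γ_{i+1}| < |δ_i|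
solving the kernel equation with δ_i; consequently
1 > ρ² = |γ₀| > |δ₀| > |γ₁| > |δ₁| > ⋯ . -/
theorem stmt6 (a lam : ℝ) (ha : 0 < a) (ha1 : a < 1) (hl : 0 < lam) (hl1 : lam < 1)
    (hρ : rhoLoad a lam < 1) :
    ∃ g d : ℕ → ℂ,
      g 0 = (((rhoLoad a lam)^2 : ℝ) : ℂ) ∧
      (∀ i : ℕ,
        (0 < ‖d i‖ ∧ ‖d i‖ < ‖g i‖ ∧
          Kernel a lam (g i) (d i)) ∧
        (∀ z : ℂ, 0 < ‖z‖ → ‖z‖ < ‖g i‖ →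
          Kernel a lam (g i) z → z = d i) ∧
        (0 < ‖g (i+1)‖ ∧ ‖g (i+1)‖ < ‖d i‖ ∧
          Kernel a lam (g (i+1)) (d i)) ∧
        (∀ z : ℂ, 0 < ‖z‖ → ‖z‖ < ‖d i‖ →
          Kernel a lam z (d i) → z = g (i+1))) ∧
      (rhoLoad a lam)^2 < 1 ∧ ‖g 0‖ = (rhoLoad a lam)^2 := by
  have h1a : 0 < 1 - a := by linarith
  have h1l : 0 < 1 - lam := by linarith
  have hρ0 : 0 < rhoLoad a lam := by
    unfold rhoLoad
    apply div_pos (by positivity) (by positivity)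
  have hρ2pos : 0 < (rhoLoad a lam)^2 := by positivity
  have hρ2lt : (rhoLoad a lam)^2 < 1 := by nlinarith
  have Hd : ∀ γ : ℝ, ∃ δ : ℝ, 0 < γ → γ < 1 →
      0 < δ ∧ δ < γ ∧ Kernel a lam (γ:ℂ) (δ:ℂ) ∧
        ∀ z : ℂ, 0 < ‖z‖ → ‖z‖ < γ → Kernel a lam (γ:ℂ) z → z = (δ:ℂ) := by
    intro γ
    by_cases h : 0 < γ ∧ γ < 1
    · obtain ⟨δ, hδ⟩ := dstep a lam ha ha1 hl hl1 γ h.1 h.2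
      exact ⟨δ, fun _ _ => hδ⟩
    · exact ⟨0, fun h1 h2 => absurd ⟨h1, h2⟩ h⟩
  have Hg : ∀ δ : ℝ, ∃ γ' : ℝ, 0 < δ → δ < 1 →
      0 < γ' ∧ γ' < δ ∧ Kernel a lam (γ':ℂ) (δ:ℂ) ∧
        ∀ z : ℂ, 0 < ‖z‖ → ‖z‖ < δ → Kernel a lam z (δ:ℂ) → z = (γ':ℂ) := by
    intro δ
    by_cases h : 0 < δ ∧ δ < 1
    · obtain ⟨γ', hγ'⟩ := gstep a lam ha ha1 hl hl1 δ h.1 h.2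
      exact ⟨γ', fun _ _ => hγ'⟩
    · exact ⟨0, fun h1 h2 => absurd ⟨h1, h2⟩ h⟩
  choose D hD using Hd
  choose Gf hG using Hg
  set gr : ℕ → ℝ := fun n => (fun x => Gf (D x))^[n] ((rhoLoad a lam)^2) with hgr
  have hsucc : ∀ n, gr (n+1) = Gf (D (gr n)) := by
    intro n
    simp only [hgr]
    exact Function.iterate_succ_apply' _ _ _
  have hInv : ∀ n, 0 < gr n ∧ gr n < 1 := by
    intro n
    induction n with
    | zero => exact ⟨hρ2pos, hρ2lt⟩
    | succ n ih =>
      obtain ⟨hd1, hd2, _, _⟩ := hD (gr n) ih.1 ih.2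
      obtain ⟨hg1', hg2', _, _⟩ := hG (D (gr n)) hd1 (lt_trans hd2 ih.2)
      rw [hsucc n]
      exact ⟨hg1', lt_trans (lt_trans hg2' hd2) ih.2⟩
  refine ⟨fun n => ((gr n : ℝ) : ℂ), fun n => ((D (gr n) : ℝ) : ℂ), rfl, ?_, hρ2lt, ?_⟩
  · intro i
    obtain ⟨hι1, hι2⟩ := hInv i
    obtain ⟨hd0, hdγ, hker, huniq⟩ := hD (gr i) hι1 hι2
    obtain ⟨hg0', hgδ, hker', huniq'⟩ := hG (D (gr i)) hd0 (lt_trans hdγ hι2)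
    have habsd : ‖((D (gr i) : ℝ) : ℂ)‖ = D (gr i) := by
      rw [Complex.norm_real, Real.norm_eq_abs, abs_of_pos hd0]
    have habsg : ‖((gr i : ℝ) : ℂ)‖ = gr i := by
      rw [Complex.norm_real, Real.norm_eq_abs, abs_of_pos hι1]
    have habsg' : ‖((gr (i+1) : ℝ) : ℂ)‖ = Gf (D (gr i)) := by
      rw [hsucc i, Complex.norm_real, Real.norm_eq_abs, abs_of_pos hg0']
    refine ⟨⟨?_, ?_, hker⟩, ?_, ⟨?_, ?_, ?_⟩, ?_⟩
    · rw [habsd]; exact hd0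
    · rw [habsd, habsg]; exact hdγ
    · intro z h1 h2 hk
      exact huniq z h1 (by rwa [habsg] at h2) hk
    · rw [habsg']; exact hg0'
    · rw [habsg', habsd]; exact hgδ
    · show Kernel a lam ((gr (i+1) : ℝ) : ℂ) _
      rw [hsucc i]
      exact hker'
    · intro z h1 h2 hk
      have := huniq' z h1 (by rwa [habsd] at h2) hk
      rw [this]
      show _ = ((gr (i+1) : ℝ) : ℂ)
      rw [hsucc i]
  · show ‖(((rhoLoad a lam)^2 : ℝ) : ℂ)‖ = (rhoLoad a lam)^2
    rw [Complex.norm_real, Real.norm_eq_abs, abs_of_pos hρ2pos]
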